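/- Let ν be a Lévy measure, n a positive integer and h = 1/n. Then for every square-summable grid function φ : ℤ → ℝ (identified with a function on the grid hℤ via j ↦ φ(j) at the point jh), one has ⟨J^hφ, φ⟩_{ℓ²} = h Σ_{j∈ℤ} (J^hφ)(j) · φ(j) ≤ 0, where J^h = J_1^h + J_2^h acts on grid functions by (J_1^hφ)(j) = Σ_{k∈𝔸_h} ζ_k^h Σ_{l=0}^{|k|−1} θ_k^l · (φ(j + s_k l + 1) − 2φ(j + s_k l) + φ(j + s_k l − 1))/h² and (J_2^hφ)(j) = Σ_{k∈𝔹_h} (φ(j+k) − φ(j)) ν(B_k^h). -/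

import Mathlib

open MeasureTheory

/-- The grid cell `B_k^h`: for `k ≥ 1` it is `((k−1)h, kh]`, for `k ≤ −1` it is `[kh, (k+1)h)`. -/
noncomputable def levyCell (h : ℝ) (k : ℤ) : Set ℝ :=
  if 0 < k then Set.Ioc (((k : ℝ) - 1) * h) ((k : ℝ) * h)
  else Set.Ico ((k : ℝ) * h) (((k : ℝ) + 1) * h)

/-- `ζ_k^h = ∫_{B_k^h} z² ν(dz)`. -/
noncomputable def zetah (ν : Measure ℝ) (h : ℝ) (k : ℤ) : ℝ := ∫ z in levyCell h k, z ^ 2 ∂ν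

/-- `θ_k^l = ∫_{l/|k|}^{(l+1)/|k|} (1−θ) dθ`. -/
noncomputable def thetaW (k : ℤ) (l : ℕ) : ℝ :=
  ∫ θ in ((l : ℝ) / (k.natAbs : ℝ))..(((l : ℝ) + 1) / (k.natAbs : ℝ)), (1 - θ)

/-- `s_k = k/|k|`, as an integer shift direction. -/
def sgnZ (k : ℤ) : ℤ := if 0 < k then 1 else -1

/-- The grid operator `J_1^h` acting on grid functions `φ : ℤ → ℝ`, with `h = 1/n`:
`(J_1^hφ)(j) = Σ_{k∈𝔸_h} ζ_k^h Σ_{l=0}^{|k|−1} θ_k^l (φ(j+s_k l+1) − 2φ(j+s_k l) + φ(j+s_k l−1))/h²`. -/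
noncomputable def J1hGrid (ν : Measure ℝ) (n : ℕ) (φ : ℤ → ℝ) (j : ℤ) : ℝ :=
  ∑ k ∈ (Finset.Icc (-(n : ℤ)) (n : ℤ)).erase 0, zetah ν (1 / n) k *
    ∑ l ∈ Finset.range k.natAbs,
      thetaW k l * ((φ (j + sgnZ k * l + 1) - 2 * φ (j + sgnZ k * l) + φ (j + sgnZ k * l - 1))
        / (1 / n : ℝ) ^ 2)

/-- The grid operator `J_2^h`, with `h = 1/n`:
`(J_2^hφ)(j) = Σ_{k∈𝔹_h} (φ(j+k) − φ(j)) ν(B_k^h)`. -/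
noncomputable def J2hGrid (ν : Measure ℝ) (n : ℕ) (φ : ℤ → ℝ) (j : ℤ) : ℝ :=
  ∑' k : ℤ, if (n : ℤ) < |k| then (φ (j + k) - φ j) * (ν (levyCell (1 / n) k)).toReal else 0

/-- `J^h = J_1^h + J_2^h` on grid functions. -/
noncomputable def JhGrid (ν : Measure ℝ) (n : ℕ) (φ : ℤ → ℝ) (j : ℤ) : ℝ :=
  J1hGrid ν n φ j + J2hGrid ν n φ j

lemma thetaW_eval (k : ℤ) (hk : k ≠ 0) (l : ℕ) :
    thetaW k l = (2 * (k.natAbs : ℝ) - 2 * l - 1) / (2 * (k.natAbs : ℝ) ^ 2) := by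
  have hm : (0:ℝ) < (k.natAbs : ℝ) := by exact_mod_cast Int.natAbs_pos.mpr hk
  have h1 : IntervalIntegrable (fun x : ℝ => x) MeasureTheory.volume
      ((l : ℝ) / (k.natAbs : ℝ)) (((l : ℝ) + 1) / (k.natAbs : ℝ)) :=
    continuous_id'.intervalIntegrable _ _
  unfold thetaW
  rw [intervalIntegral.integral_sub intervalIntegrable_const h1, intervalIntegral.integral_const,
    show (∫ x in ((l : ℝ) / (k.natAbs : ℝ))..(((l : ℝ) + 1) / (k.natAbs : ℝ)), x)
      = ((((l : ℝ) + 1) / (k.natAbs : ℝ)) ^ 2 - ((l : ℝ) / (k.natAbs : ℝ)) ^ 2) / 2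
      from integral_id]
  field_simp
  ring_nf
  simp only [pow_two, ne_eq, hm.ne', not_false_eq_true, mul_inv_cancel_right₀]

lemma measurableSet_levyCell (h : ℝ) (k : ℤ) : MeasurableSet (levyCell h k) := by
  unfold levyCell; split
  · exact measurableSet_Ioc
  · exact measurableSet_Ico

lemma zetah_nonneg (ν : Measure ℝ) (h : ℝ) (k : ℤ) : 0 ≤ zetah ν h k :=
  setIntegral_nonneg (measurableSet_levyCell h k) (fun z _ => sq_nonneg z)

lemma telescope (ψ : ℤ → ℝ) (m : ℕ) :
    ∑ l ∈ Finset.range m, (ψ ((l:ℤ)+1) - 2*ψ (l:ℤ) + ψ ((l:ℤ)-1))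
      = ψ (m:ℤ) - ψ ((m:ℤ)-1) - ψ 0 + ψ (-1) := by
  induction m with
  | zero => simp
  | succ m ih =>
    rw [Finset.sum_range_succ, ih]
    push_cast
    ring_nf

lemma abel (ψ : ℤ → ℝ) (m : ℕ) :
    ∑ l ∈ Finset.range (m+1), (2*((m:ℝ)+1) - 2*l - 1) * (ψ ((l:ℤ)+1) - 2*ψ (l:ℤ) + ψ ((l:ℤ)-1))
      = ψ ((m:ℤ)+1) + ψ (m:ℤ) + (2*((m:ℝ)+1)-1) * ψ (-1) - (2*((m:ℝ)+1)+1) * ψ 0 := by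
  induction m with
  | zero => simp; ring
  | succ m ih =>
    rw [Finset.sum_range_succ]
    push_cast
    have split : ∀ l ∈ Finset.range (m+1),
        (2*((m:ℝ)+1+1) - 2*l - 1) * (ψ ((l:ℤ)+1) - 2*ψ (l:ℤ) + ψ ((l:ℤ)-1))
          = (2*((m:ℝ)+1) - 2*l - 1) * (ψ ((l:ℤ)+1) - 2*ψ (l:ℤ) + ψ ((l:ℤ)-1))
            + 2 * (ψ ((l:ℤ)+1) - 2*ψ (l:ℤ) + ψ ((l:ℤ)-1)) := by
      intro l _; ring
    rw [Finset.sum_congr rfl split, Finset.sum_add_distrib, ih, ← Finset.mul_sum,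
      telescope ψ (m+1)]
    push_cast
    ring_nf

section Tcorr
variable (φ : ℤ → ℝ)

noncomputable def Tcorr (m : ℤ) : ℝ := ∑' j : ℤ, φ (j + m) * φ j

variable {φ} (hφ : Summable fun j : ℤ => φ j ^ 2)
include hφ

lemma summable_shift_sq (m : ℤ) : Summable fun j : ℤ => φ (j + m) ^ 2 :=
  ((Equiv.addRight m).summable_iff (f := fun j : ℤ => φ j ^ 2)).mpr hφ

omit hφ in
lemma tsum_shift_sq (m : ℤ) : ∑' j : ℤ, φ (j + m) ^ 2 = ∑' j : ℤ, φ j ^ 2 :=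
  (Equiv.addRight m).tsum_eq (fun j : ℤ => φ j ^ 2)

lemma summable_mul_shift (m : ℤ) : Summable fun j : ℤ => φ (j + m) * φ j := by
  have hb : Summable fun j : ℤ => (φ (j + m) ^ 2 + φ j ^ 2) / 2 :=
    ((summable_shift_sq hφ m).add hφ).div_const 2
  have hbound : ∀ j : ℤ, |φ (j + m) * φ j| ≤ (φ (j + m) ^ 2 + φ j ^ 2) / 2 := by
    intro j
    rw [abs_mul]
    nlinarith [sq_abs (φ (j + m)), sq_abs (φ j), sq_nonneg (|φ (j + m)| - |φ j|)]
  exact Summable.of_abs (hb.of_nonneg_of_le (fun j => abs_nonneg _) hbound)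

omit hφ in
lemma Tcorr_zero : Tcorr φ 0 = ∑' j : ℤ, φ j ^ 2 := by
  unfold Tcorr; congr 1; funext j; rw [add_zero]; ring

lemma Tcorr_le (m : ℤ) : Tcorr φ m ≤ Tcorr φ 0 := by
  rw [Tcorr_zero]
  have h2 : ∑' j : ℤ, (φ (j + m) ^ 2 + φ j ^ 2) / 2 = ∑' j : ℤ, φ j ^ 2 := by
    rw [tsum_div_const, Summable.tsum_add (summable_shift_sq hφ m) hφ, tsum_shift_sq]
    ring
  rw [← h2]
  exact Summable.tsum_le_tsum (fun j => by nlinarith [sq_nonneg (φ (j + m) - φ j)])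
    (summable_mul_shift hφ m) (((summable_shift_sq hφ m).add hφ).div_const 2)

omit hφ in
lemma Tcorr_neg (m : ℤ) : Tcorr φ (-m) = Tcorr φ m := by
  unfold Tcorr
  rw [← (Equiv.addRight m).tsum_eq (fun j : ℤ => φ (j + -m) * φ j)]
  apply tsum_congr
  intro j
  simp [mul_comm]

lemma summable_sd (a : ℤ) :
    Summable fun j : ℤ => (φ (j + a + 1) - 2 * φ (j + a) + φ (j + a - 1)) * φ j := by
  have key : (fun j : ℤ => (φ (j + a + 1) - 2 * φ (j + a) + φ (j + a - 1)) * φ j)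
      = fun j : ℤ => φ (j + (a + 1)) * φ j - 2 * (φ (j + a) * φ j) + φ (j + (a - 1)) * φ j := by
    funext j
    rw [show j + a + 1 = j + (a + 1) by ring, show j + a - 1 = j + (a - 1) by ring]
    ring
  rw [key]
  exact ((summable_mul_shift hφ (a+1)).sub ((summable_mul_shift hφ a).mul_left 2)).add
    (summable_mul_shift hφ (a-1))

lemma tsum_sd (a : ℤ) :
    ∑' j : ℤ, (φ (j + a + 1) - 2 * φ (j + a) + φ (j + a - 1)) * φ j
      = Tcorr φ (a + 1) - 2 * Tcorr φ a + Tcorr φ (a - 1) := by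
  have key : (fun j : ℤ => (φ (j + a + 1) - 2 * φ (j + a) + φ (j + a - 1)) * φ j)
      = fun j : ℤ => φ (j + (a + 1)) * φ j - 2 * (φ (j + a) * φ j) + φ (j + (a - 1)) * φ j := by
    funext j
    rw [show j + a + 1 = j + (a + 1) by ring, show j + a - 1 = j + (a - 1) by ring]
    ring
  rw [key, Summable.tsum_add ((summable_mul_shift hφ (a+1)).sub ((summable_mul_shift hφ a).mul_left 2))
      (summable_mul_shift hφ (a-1)),
    Summable.tsum_sub (summable_mul_shift hφ (a+1)) ((summable_mul_shift hφ a).mul_left 2),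
    tsum_mul_left]
  rfl

end Tcorr

section J1
variable {φ : ℤ → ℝ} (hφ : Summable fun j : ℤ => φ j ^ 2)
include hφ

lemma tsum_sd_sgn (k : ℤ) (l : ℕ) :
    ∑' j : ℤ, (φ (j + sgnZ k * l + 1) - 2 * φ (j + sgnZ k * l) + φ (j + sgnZ k * l - 1)) * φ j
      = Tcorr φ ((l:ℤ) + 1) - 2 * Tcorr φ (l:ℤ) + Tcorr φ ((l:ℤ) - 1) := by
  rw [tsum_sd hφ]
  unfold sgnZ
  split
  · rw [one_mul]
  · rw [show (-1 : ℤ) * l + 1 = -((l:ℤ) - 1) by ring, show (-1 : ℤ) * l - 1 = -((l:ℤ) + 1) by ring,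
      show (-1 : ℤ) * l = -(l:ℤ) by ring, Tcorr_neg, Tcorr_neg, Tcorr_neg]
    ring

lemma J1k_summand (ν : Measure ℝ) (n : ℕ) (k : ℤ) (hk : k ≠ 0) :
    Summable (fun j : ℤ => (zetah ν (1 / n) k *
        ∑ l ∈ Finset.range k.natAbs, thetaW k l *
          ((φ (j + sgnZ k * l + 1) - 2 * φ (j + sgnZ k * l) + φ (j + sgnZ k * l - 1))
            / (1 / n : ℝ) ^ 2)) * φ j)
    ∧ ∑' j : ℤ, (zetah ν (1 / n) k *
        ∑ l ∈ Finset.range k.natAbs, thetaW k l *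
          ((φ (j + sgnZ k * l + 1) - 2 * φ (j + sgnZ k * l) + φ (j + sgnZ k * l - 1))
            / (1 / n : ℝ) ^ 2)) * φ j ≤ 0 := by
  set c := zetah ν (1 / n) k with hc
  set H := ((1 / n : ℝ)) ^ 2 with hH
  have hc0 : 0 ≤ c := zetah_nonneg ν _ k
  have hH0 : 0 ≤ H := sq_nonneg _
  -- rewrite the summand as a finite sum of multiples of second-difference products
  have key : (fun j : ℤ => (c * ∑ l ∈ Finset.range k.natAbs, thetaW k l *
        ((φ (j + sgnZ k * l + 1) - 2 * φ (j + sgnZ k * l) + φ (j + sgnZ k * l - 1)) / H)) * φ j)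
      = fun j : ℤ => ∑ l ∈ Finset.range k.natAbs, (c * thetaW k l / H) *
        ((φ (j + sgnZ k * l + 1) - 2 * φ (j + sgnZ k * l) + φ (j + sgnZ k * l - 1)) * φ j) := by
    funext j
    rw [Finset.mul_sum, Finset.sum_mul]
    exact Finset.sum_congr rfl (fun l _ => by ring)
  have hsum : ∀ l ∈ Finset.range k.natAbs, Summable (fun j : ℤ => (c * thetaW k l / H) *
      ((φ (j + sgnZ k * l + 1) - 2 * φ (j + sgnZ k * l) + φ (j + sgnZ k * l - 1)) * φ j)) := by
    intro l _
    exact (summable_sd hφ (sgnZ k * l)).mul_left _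
  constructor
  · rw [key]; exact summable_sum hsum
  · rw [key, Summable.tsum_finsetSum hsum]
    have hval : ∀ l ∈ Finset.range k.natAbs,
        (∑' j : ℤ, (c * thetaW k l / H) *
          ((φ (j + sgnZ k * l + 1) - 2 * φ (j + sgnZ k * l) + φ (j + sgnZ k * l - 1)) * φ j))
        = (c / H) * (thetaW k l *
            (Tcorr φ ((l:ℤ) + 1) - 2 * Tcorr φ (l:ℤ) + Tcorr φ ((l:ℤ) - 1))) := by
      intro l _
      rw [tsum_mul_left, tsum_sd_sgn hφ k l]
      ring
    rw [Finset.sum_congr rfl hval, ← Finset.mul_sum]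
    apply mul_nonpos_of_nonneg_of_nonpos (div_nonneg hc0 hH0)
    -- now the main Abel estimate
    obtain ⟨m, hm⟩ : ∃ m, k.natAbs = m + 1 :=
      ⟨k.natAbs - 1, (Nat.succ_pred_eq_of_pos (Int.natAbs_pos.mpr hk)).symm⟩
    rw [hm]
    have hth : ∀ l ∈ Finset.range (m + 1),
        thetaW k l * (Tcorr φ ((l:ℤ) + 1) - 2 * Tcorr φ (l:ℤ) + Tcorr φ ((l:ℤ) - 1))
          = (1 / (2 * ((m:ℝ)+1)^2)) * ((2*((m:ℝ)+1) - 2*l - 1) *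
            (Tcorr φ ((l:ℤ) + 1) - 2 * Tcorr φ (l:ℤ) + Tcorr φ ((l:ℤ) - 1))) := by
      intro l _
      rw [thetaW_eval k hk l, hm]
      push_cast
      ring
    rw [Finset.sum_congr rfl hth, ← Finset.mul_sum, abel (Tcorr φ) m]
    apply mul_nonpos_of_nonneg_of_nonpos (by positivity)
    have e1 : Tcorr φ (-1) = Tcorr φ 1 := by
      rw [show (-1 : ℤ) = -(1:ℤ) by ring, Tcorr_neg]
    rw [e1]
    have l1 := Tcorr_le hφ ((m:ℤ) + 1)
    have l2 := Tcorr_le hφ (m:ℤ)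
    have l3 := Tcorr_le hφ 1
    have hco : (0:ℝ) ≤ 2*((m:ℝ)+1) - 1 := by
      have : (0:ℝ) ≤ (m:ℝ) := Nat.cast_nonneg m
      linarith
    nlinarith [mul_le_mul_of_nonneg_left l3 hco]

end J1

lemma levyCell_disjoint {h : ℝ} (hh : 0 < h) {k k' : ℤ} (hk : k ≠ 0) (hk' : k' ≠ 0)
    (hne : k ≠ k') : Disjoint (levyCell h k) (levyCell h k') := by
  have key : ∀ {a b : ℤ}, a ≠ 0 → b ≠ 0 → a < b → Disjoint (levyCell h a) (levyCell h b) := by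
    intro a b ha hb hab
    unfold levyCell
    by_cases h0a : 0 < a
    · have h0b : 0 < b := lt_trans h0a hab
      rw [if_pos h0a, if_pos h0b, Set.Ioc_disjoint_Ioc]
      have hcast : (a : ℝ) ≤ (b : ℝ) - 1 := by
        have : a + 1 ≤ b := hab
        have : (a : ℝ) + 1 ≤ (b : ℝ) := by exact_mod_cast this
        linarith
      calc (a : ℝ) * h ⊓ (b : ℝ) * h ≤ (a : ℝ) * h := inf_le_left
        _ ≤ ((b : ℝ) - 1) * h := mul_le_mul_of_nonneg_right hcast hh.le
        _ ≤ ((a : ℝ) - 1) * h ⊔ ((b : ℝ) - 1) * h := le_sup_right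
    · by_cases h0b : 0 < b
      ·
        rw [if_neg h0a, if_pos h0b]
        have ha1 : a ≤ -1 := by omega
        have hb1 : 1 ≤ b := h0b
        apply Set.disjoint_left.mpr
        intro z hz hz'
        have h1 : z < ((a : ℝ) + 1) * h := hz.2
        have h2 : (((b : ℝ) - 1)) * h < z := hz'.1
        have ha' : ((a : ℝ) + 1) ≤ 0 := by
          have : (a : ℝ) ≤ -1 := by exact_mod_cast ha1
          linarith
        have hb' : (0 : ℝ) ≤ (b : ℝ) - 1 := by
          have : (1 : ℝ) ≤ (b : ℝ) := by exact_mod_cast hb1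
          linarith
        nlinarith
      · -- both nonpositive
        rw [if_neg h0a, if_neg h0b, Set.Ico_disjoint_Ico]
        have hcast : (a : ℝ) + 1 ≤ (b : ℝ) := by
          have : a + 1 ≤ b := hab
          exact_mod_cast this
        calc ((a : ℝ) + 1) * h ⊓ ((b : ℝ) + 1) * h ≤ ((a : ℝ) + 1) * h := inf_le_left
          _ ≤ (b : ℝ) * h := mul_le_mul_of_nonneg_right hcast hh.le
          _ ≤ (a : ℝ) * h ⊔ (b : ℝ) * h := le_sup_right
  rcases hne.lt_or_gt with hab | hab
  · exact key hk hk' hab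
  · exact (key hk' hk hab).symm

lemma levyCell_subset_large {n : ℕ} (hn : 0 < n) {k : ℤ} (hk : (n : ℤ) < |k|) :
    levyCell (1 / n) k ⊆ {z : ℝ | 1 ≤ |z|} := by
  have hnR : (0 : ℝ) < (n : ℝ) := by exact_mod_cast hn
  intro z hz
  unfold levyCell at hz
  by_cases h0 : 0 < k
  · rw [if_pos h0] at hz
    have hk' : (n : ℤ) + 1 ≤ k := by
      rw [abs_of_pos h0] at hk; omega
    have hcast : (n : ℝ) ≤ (k : ℝ) - 1 := by
      have : (n : ℝ) + 1 ≤ (k : ℝ) := by exact_mod_cast hk'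
      linarith
    have h1 : (1 : ℝ) ≤ ((k : ℝ) - 1) * (1 / n) := by
      rw [mul_one_div, le_div_iff₀ hnR, one_mul]
      exact hcast
    have : (1 : ℝ) < z := lt_of_le_of_lt h1 hz.1
    simp only [Set.mem_setOf_eq]
    rw [abs_of_pos (by linarith)]
    linarith
  · rw [if_neg h0] at hz
    have hk' : k + 1 ≤ -(n : ℤ) := by
      rw [abs_of_nonpos (by omega)] at hk; omega
    have hcast : (k : ℝ) + 1 ≤ -(n : ℝ) := by exact_mod_cast hk'
    have h1 : ((k : ℝ) + 1) * (1 / n) ≤ -1 := by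
      rw [mul_one_div, div_le_iff₀ hnR]
      linarith
    have : z < -1 := lt_of_lt_of_le hz.2 h1
    simp only [Set.mem_setOf_eq]
    rw [abs_of_neg (by linarith)]
    linarith

lemma nu_large_lt_top (ν : Measure ℝ)
    (hνint : ∫⁻ z, ENNReal.ofReal (min 1 (z ^ 2)) ∂ν < ⊤) :
    ν {z : ℝ | 1 ≤ |z|} < ⊤ := by
  have hms : MeasurableSet {z : ℝ | 1 ≤ |z|} :=
    (isClosed_le continuous_const continuous_abs).measurableSet
  have hmono : ν {z : ℝ | 1 ≤ |z|} ≤ ∫⁻ z, ENNReal.ofReal (min 1 (z ^ 2)) ∂ν := by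
    calc ν {z : ℝ | 1 ≤ |z|} = ∫⁻ _ in {z : ℝ | 1 ≤ |z|}, 1 ∂ν := (setLIntegral_one _).symm
      _ ≤ ∫⁻ z in {z : ℝ | 1 ≤ |z|}, ENNReal.ofReal (min 1 (z ^ 2)) ∂ν := by
          apply setLIntegral_mono (ENNReal.measurable_ofReal.comp
            (measurable_const.min ((measurable_id.pow_const 2))))
          intro z hz
          rw [show (1 : ENNReal) = ENNReal.ofReal 1 by simp]
          apply ENNReal.ofReal_le_ofReal
          have hz' : (1 : ℝ) ≤ |z| := hz
          have : (1 : ℝ) ≤ z ^ 2 := by nlinarith [sq_abs z]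
          simp [min_eq_left this]
      _ ≤ ∫⁻ z, ENNReal.ofReal (min 1 (z ^ 2)) ∂ν := setLIntegral_le_lintegral _ _
  exact lt_of_le_of_lt hmono hνint

lemma sum_nu_ne_top (ν : Measure ℝ)
    (hνint : ∫⁻ z, ENNReal.ofReal (min 1 (z ^ 2)) ∂ν < ⊤) (n : ℕ) (hn : 0 < n) :
    ∑' k : ℤ, (if (n : ℤ) < |k| then ν (levyCell (1 / n) k) else 0) ≠ ⊤ := by
  set S : ℤ → Set ℝ := fun k => if (n : ℤ) < |k| then levyCell (1 / n) k else ∅ with hS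
  have hcong : ∀ k : ℤ, (if (n : ℤ) < |k| then ν (levyCell (1 / n) k) else 0) = ν (S k) := by
    intro k; by_cases hb : (n : ℤ) < |k| <;> simp [hS, hb]
  have hmeas : ∀ k, MeasurableSet (S k) := by
    intro k
    by_cases hb : (n : ℤ) < |k| <;> simp [hS, hb, measurableSet_levyCell]
  have hh : (0 : ℝ) < 1 / n := by positivity
  have hdisj : Pairwise (Function.onFun Disjoint S) := by
    intro k k' hne
    simp only [Function.onFun, hS]
    by_cases hb : (n : ℤ) < |k|
    · by_cases hb' : (n : ℤ) < |k'|
      · rw [if_pos hb, if_pos hb']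
        exact levyCell_disjoint hh (by rw [← abs_pos]; omega) (by rw [← abs_pos]; omega) hne
      · rw [if_neg hb']; exact Set.disjoint_empty _
    · rw [if_neg hb]; exact Set.empty_disjoint _
  rw [tsum_congr hcong, ← measure_iUnion hdisj hmeas]
  have hsub : (⋃ k, S k) ⊆ {z : ℝ | 1 ≤ |z|} := by
    apply Set.iUnion_subset
    intro k
    by_cases hb : (n : ℤ) < |k|
    · simp only [hS, if_pos hb]; exact levyCell_subset_large hn hb
    · simp only [hS, if_neg hb]; exact Set.empty_subset _
  exact ((measure_mono hsub).trans_lt (nu_large_lt_top ν hνint)).ne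

lemma summable_wnu (ν : Measure ℝ)
    (hνint : ∫⁻ z, ENNReal.ofReal (min 1 (z ^ 2)) ∂ν < ⊤) (n : ℕ) (hn : 0 < n) :
    Summable (fun k : ℤ => if (n : ℤ) < |k| then (ν (levyCell (1 / n) k)).toReal else 0) := by
  have key : (fun k : ℤ => if (n : ℤ) < |k| then (ν (levyCell (1 / n) k)).toReal else 0)
      = fun k : ℤ => ((if (n : ℤ) < |k| then ν (levyCell (1 / n) k) else 0 : ENNReal)).toReal := by
    funext k
    by_cases hb : (n : ℤ) < |k| <;> simp [hb]
  rw [key]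
  exact ENNReal.summable_toReal (sum_nu_ne_top ν hνint n hn)

/-- Negative semi-definiteness of `J^h` on `ℓ²(hℤ)`: for every square-summable grid function
`φ : ℤ → ℝ`, `⟨J^hφ, φ⟩_{ℓ²} = h Σ_j (J^hφ)(j) φ(j) ≤ 0`. -/
theorem JhGrid_negative_semidefinite
    (ν : Measure ℝ) (hν0 : ν {0} = 0)
    (hνint : ∫⁻ z, ENNReal.ofReal (min 1 (z ^ 2)) ∂ν < ⊤)
    (n : ℕ) (hn : 0 < n)
    (φ : ℤ → ℝ) (hφ : Summable fun j : ℤ => φ j ^ 2) :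
    (1 / n : ℝ) * ∑' j : ℤ, JhGrid ν n φ j * φ j ≤ 0 := by
  classical
  simp only [JhGrid]
  set wν : ℤ → ℝ := fun k => if (n : ℤ) < |k| then (ν (levyCell (1 / n) k)).toReal else 0 with hwνdef
  have hwν_nonneg : ∀ k, 0 ≤ wν k := by
    intro k; simp only [hwνdef]
    by_cases hb : (n : ℤ) < |k| <;> simp [hb, ENNReal.toReal_nonneg]
  have hwν : Summable wν := summable_wnu ν hνint n hn
  set G : ℤ → ℤ → ℝ := fun k j =>
    (if (n : ℤ) < |k| then (φ (j + k) - φ j) * (ν (levyCell (1 / n) k)).toReal else 0) * φ j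
    with hGdef
  set M : ℝ := ∑' j : ℤ, φ j ^ 2 with hMdef
  have hM0 : 0 ≤ M := tsum_nonneg (fun j => sq_nonneg _)
  have hφ_le : ∀ j : ℤ, φ j ^ 2 ≤ M := fun j => Summable.le_tsum hφ j (fun _ _ => sq_nonneg _)
  -- pointwise bound
  have habs : ∀ k j : ℤ, |G k j| ≤ wν k * (φ (j + k) ^ 2 / 2 + 3 / 2 * φ j ^ 2) := by
    intro k j
    by_cases hb : (n : ℤ) < |k|
    · simp only [hGdef, hwνdef, if_pos hb]
      set c := (ν (levyCell (1 / n) k)).toReal with hcdef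
      have hc : 0 ≤ c := ENNReal.toReal_nonneg
      set a := φ (j + k) with hadef
      set b := φ j with hbdef
      have h1 : |(a - b) * c * b| = c * (|a - b| * |b|) := by
        rw [abs_mul, abs_mul, abs_of_nonneg hc]; ring
      rw [h1]
      have h2 : |a - b| * |b| ≤ a ^ 2 / 2 + 3 / 2 * b ^ 2 := by
        have ht : |a - b| ≤ |a| + |b| := abs_sub a b
        nlinarith [sq_abs a, sq_abs b, abs_nonneg b, abs_nonneg a,
          sq_nonneg (|a| - |b|), mul_le_mul_of_nonneg_right ht (abs_nonneg b)]
      calc c * (|a - b| * |b|) ≤ c * (a ^ 2 / 2 + 3 / 2 * b ^ 2) :=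
            mul_le_mul_of_nonneg_left h2 hc
        _ = c * (a ^ 2 / 2 + 3 / 2 * b ^ 2) := rfl
    · simp [hGdef, hwνdef, hb]
  -- summability of the dominating family in j
  have hBsum : ∀ k : ℤ, Summable (fun j : ℤ => wν k * (φ (j + k) ^ 2 / 2 + 3 / 2 * φ j ^ 2)) :=
    fun k => (((summable_shift_sq hφ k).div_const 2).add (hφ.mul_left (3 / 2))).mul_left _
  have hBtsum : ∀ k : ℤ, ∑' j : ℤ, wν k * (φ (j + k) ^ 2 / 2 + 3 / 2 * φ j ^ 2)
      = wν k * (2 * M) := by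
    intro k
    rw [tsum_mul_left, Summable.tsum_add ((summable_shift_sq hφ k).div_const 2) (hφ.mul_left (3 / 2)),
      tsum_div_const, tsum_mul_left, tsum_shift_sq, ← hMdef]
    ring
  have hGabs_k : ∀ k : ℤ, Summable (fun j : ℤ => |G k j|) := fun k =>
    (hBsum k).of_nonneg_of_le (fun j => abs_nonneg _) (habs k)
  have hGk : ∀ k : ℤ, Summable (G k) := fun k => summable_abs_iff.mp (hGabs_k k)
  have htsumabs_le : ∀ k : ℤ, ∑' j : ℤ, |G k j| ≤ wν k * (2 * M) := fun k =>
    (Summable.tsum_le_tsum (habs k) (hGabs_k k) (hBsum k)).trans_eq (hBtsum k)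
  have hsums : Summable (fun k : ℤ => ∑' j : ℤ, |G k j|) :=
    (hwν.mul_right (2 * M)).of_nonneg_of_le
      (fun k => tsum_nonneg (fun j => abs_nonneg _)) htsumabs_le
  have huncabs : Summable (fun p : ℤ × ℤ => |G p.1 p.2|) :=
    (summable_prod_of_nonneg (fun p => abs_nonneg _)).mpr ⟨hGabs_k, hsums⟩
  have hunc : Summable (fun p : ℤ × ℤ => G p.1 p.2) := summable_abs_iff.mp huncabs
  -- summability in k for fixed j
  have hGj : ∀ j : ℤ, Summable (fun k : ℤ => G k j) := by
    intro j
    apply summable_abs_iff.mp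
    apply (hwν.mul_right (M / 2 + 3 / 2 * φ j ^ 2)).of_nonneg_of_le (fun k => abs_nonneg _)
    intro k
    calc |G k j| ≤ wν k * (φ (j + k) ^ 2 / 2 + 3 / 2 * φ j ^ 2) := habs k j
      _ ≤ wν k * (M / 2 + 3 / 2 * φ j ^ 2) := by
          apply mul_le_mul_of_nonneg_left _ (hwν_nonneg k)
          have := hφ_le (j + k)
          linarith
  -- identification of J2 pairing
  have hJ2eq : ∀ j : ℤ, J2hGrid ν n φ j * φ j = ∑' k : ℤ, G k j := by
    intro j
    unfold J2hGrid
    exact (tsum_mul_right).symm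
  have hJ2summ : Summable (fun j : ℤ => J2hGrid ν n φ j * φ j) := by
    have hswapped : Summable (fun p : ℤ × ℤ => G p.2 p.1) :=
      ((Equiv.prodComm ℤ ℤ).summable_iff (f := fun p : ℤ × ℤ => G p.1 p.2)).mpr hunc
    have hfib : HasSum (fun j : ℤ => ∑' k : ℤ, G k j) (∑' p : ℤ × ℤ, G p.2 p.1) :=
      HasSum.prod_fiberwise hswapped.hasSum (fun j => (hGj j).hasSum)
    have : Summable (fun j : ℤ => ∑' k : ℤ, G k j) := ⟨_, hfib⟩
    exact this.congr (fun j => (hJ2eq j).symm)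
  have hJ2tsum : ∑' j : ℤ, J2hGrid ν n φ j * φ j ≤ 0 := by
    have hunc' : Summable (Function.uncurry G) := hunc
    rw [tsum_congr hJ2eq, Summable.tsum_comm' hunc' hGk hGj]
    apply tsum_nonpos
    intro k
    by_cases hb : (n : ℤ) < |k|
    · have hkey : (fun j : ℤ => G k j) = fun j : ℤ =>
          (ν (levyCell (1 / n) k)).toReal * (φ (j + k) * φ j)
            - (ν (levyCell (1 / n) k)).toReal * (φ j ^ 2) := by
        funext j
        simp only [hGdef, if_pos hb]
        ring
      rw [hkey, Summable.tsum_sub ((summable_mul_shift hφ k).mul_left _) (hφ.mul_left _),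
        tsum_mul_left, tsum_mul_left]
      have hle : (∑' j : ℤ, φ (j + k) * φ j) ≤ ∑' j : ℤ, φ j ^ 2 := by
        have := Tcorr_le hφ k
        rw [Tcorr_zero] at this
        exact this
      have hc : 0 ≤ (ν (levyCell (1 / n) k)).toReal := ENNReal.toReal_nonneg
      have := mul_le_mul_of_nonneg_left hle hc
      linarith
    · simp only [hGdef, if_neg hb]
      simp
  -- J1 part
  set A : Finset ℤ := (Finset.Icc (-(n : ℤ)) (n : ℤ)).erase 0 with hAdef
  set F : ℤ → ℤ → ℝ := fun k j => (zetah ν (1 / n) k *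
      ∑ l ∈ Finset.range k.natAbs, thetaW k l *
        ((φ (j + sgnZ k * l + 1) - 2 * φ (j + sgnZ k * l) + φ (j + sgnZ k * l - 1))
          / (1 / n : ℝ) ^ 2)) * φ j with hFdef
  have hkA : ∀ k ∈ A, k ≠ 0 := fun k hk => (Finset.mem_erase.mp hk).1
  have hJ1eq : ∀ j : ℤ, J1hGrid ν n φ j * φ j = ∑ k ∈ A, F k j := by
    intro j
    unfold J1hGrid
    rw [Finset.sum_mul]
  have hJ1summ : Summable (fun j : ℤ => J1hGrid ν n φ j * φ j) := by
    apply Summable.congr (summable_sum (f := F)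
      (fun k hk => (J1k_summand hφ ν n k (hkA k hk)).1))
    intro j
    exact (hJ1eq j).symm
  have hJ1tsum : ∑' j : ℤ, J1hGrid ν n φ j * φ j ≤ 0 := by
    rw [tsum_congr hJ1eq, Summable.tsum_finsetSum (fun k hk => (J1k_summand hφ ν n k (hkA k hk)).1)]
    exact Finset.sum_nonpos (fun k hk => (J1k_summand hφ ν n k (hkA k hk)).2)
  -- combine
  have hsplit : ∑' j : ℤ, (J1hGrid ν n φ j + J2hGrid ν n φ j) * φ j
      = (∑' j : ℤ, J1hGrid ν n φ j * φ j) + ∑' j : ℤ, J2hGrid ν n φ j * φ j := by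
    rw [← Summable.tsum_add hJ1summ hJ2summ]
    exact tsum_congr (fun j => add_mul _ _ _)
  rw [hsplit]
  apply mul_nonpos_of_nonneg_of_nonpos (by positivity)
  linarith
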